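/- For θ ∈ [0,π], let e_θ denote the Born-rule empirical model of the state |diag;θ,π/4⟩ = cos(θ/2)·|0⟩⊗|0⟩ + e^{iπ/4} sin(θ/2)·|1⟩⊗|1⟩ in the two-party Bell scenario in which both Alice's and Bob's two measurements are given by the Pauli bases B_x = {(|0⟩+|1⟩)/√2, (|0⟩−|1⟩)/√2} and B_y = {(|0⟩+i|1⟩)/√2, (|0⟩−i|1⟩)/√2}. If π/4 < θ < 3π/4 (equivalently sin θ > √2/2), then e_θ is contextual: no probability distribution d on functions g : {a₁,a₂,b₁,b₂} → {0,1} has marginals to the four contexts {a_i, b_j} equal to (e_θ)_{{a_i,b_j}}; consequently CF(e_θ) > 0. -/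

import Mathlib

open scoped ComplexConjugate

/-- Standard Hermitian inner product on `ℂ²` (conjugate-linear in the first slot). -/
noncomputable def ip2 (u v : Fin 2 → ℂ) : ℂ := ∑ i, conj (u i) * v i

/-- Tensor product `u ⊗ v ∈ ℂ² ⊗ ℂ²`, as a function on `Fin 2 × Fin 2`. -/
noncomputable def tens (u v : Fin 2 → ℂ) : Fin 2 × Fin 2 → ℂ := fun p => u p.1 * v p.2

/-- Standard Hermitian inner product on `ℂ² ⊗ ℂ²` (conjugate-linear in the
first slot). -/
noncomputable def ip4 (u v : Fin 2 × Fin 2 → ℂ) : ℂ := ∑ p, conj (u p) * v p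

/-- Bloch vector `|θ,φ⟩ = cos(θ/2)|0⟩ + e^{iφ} sin(θ/2)|1⟩`. -/
noncomputable def bloch (θ φ : ℝ) : Fin 2 → ℂ :=
  ![(Real.cos (θ / 2) : ℂ), Complex.exp (φ * Complex.I) * (Real.sin (θ / 2) : ℂ)]

/-- The orthonormal basis `B(θ,φ) = {|θ,φ⟩, |π−θ,π+φ⟩}` of `ℂ²`, indexed by the
outcome. -/
noncomputable def Bbasis (θ φ : ℝ) : Fin 2 → Fin 2 → ℂ :=
  ![bloch θ φ, bloch (Real.pi - θ) (Real.pi + φ)]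

/-- The Born-rule empirical model of the state `ψ ∈ ℂ² ⊗ ℂ²` when Alice's
measurement `a_{i+1}` is given by the orthonormal basis `A i` and Bob's
measurement `b_{j+1}` by the orthonormal basis `B j`:
`e_{{a_i,b_j}}(s,t) = |⟨α_{i,s} ⊗ β_{j,t}, ψ⟩|²`. -/
noncomputable def born (A B : Fin 2 → Fin 2 → Fin 2 → ℂ) (ψ : Fin 2 × Fin 2 → ℂ) :
    Fin 2 → Fin 2 → Fin 2 → Fin 2 → ℝ := fun i j s t =>
  ‖ip4 (tens (A i s) (B j t)) ψ‖ ^ 2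

/-- An empirical model on the two-party Bell scenario: for each context
`{a_{i+1}, b_{j+1}}` a probability distribution on joint outcomes `(s, t)`. -/
def IsModel (e : Fin 2 → Fin 2 → Fin 2 → Fin 2 → ℝ) : Prop :=
  (∀ i j s t, 0 ≤ e i j s t) ∧ ∀ i j, (∑ s, ∑ t, e i j s t) = 1

/-- Noncontextuality: a global probability distribution on assignments
`g : {a₁,a₂,b₁,b₂} → {0,1}` (with `X` encoded as `Fin 2 ⊕ Fin 2`, `inl i = a_{i+1}`,
`inr j = b_{j+1}`) marginalises to every context. -/
def Noncontextual (e : Fin 2 → Fin 2 → Fin 2 → Fin 2 → ℝ) : Prop :=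
  ∃ d : (Fin 2 ⊕ Fin 2 → Fin 2) → ℝ,
    (∀ g, 0 ≤ d g) ∧ (∑ g, d g) = 1 ∧
    ∀ i j s t, (∑ g ∈ Finset.univ.filter
        (fun g : Fin 2 ⊕ Fin 2 → Fin 2 => g (.inl i) = s ∧ g (.inr j) = t), d g)
      = e i j s t

/-- The noncontextual fraction of an empirical model. -/
noncomputable def NCF (e : Fin 2 → Fin 2 → Fin 2 → Fin 2 → ℝ) : ℝ :=
  sSup {l : ℝ | 0 ≤ l ∧ l ≤ 1 ∧
    ∃ eNC e' : Fin 2 → Fin 2 → Fin 2 → Fin 2 → ℝ,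
      IsModel eNC ∧ Noncontextual eNC ∧ IsModel e' ∧
      ∀ i j s t, e i j s t = l * eNC i j s t + (1 - l) * e' i j s t}

/-- The contextual fraction of an empirical model. -/
noncomputable def CF (e : Fin 2 → Fin 2 → Fin 2 → Fin 2 → ℝ) : ℝ := 1 - NCF e

/-- Diagonal two-qubit state `|diag;θ,φ⟩ = cos(θ/2)|00⟩ + e^{iφ} sin(θ/2)|11⟩`. -/
noncomputable def diagState (θ φ : ℝ) : Fin 2 × Fin 2 → ℂ := fun p =>
  if p = (0, 0) then (Real.cos (θ / 2) : ℂ)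
  else if p = (1, 1) then Complex.exp (φ * Complex.I) * (Real.sin (θ / 2) : ℂ)
  else 0

/-- The Pauli `x` basis `{(|0⟩+|1⟩)/√2, (|0⟩−|1⟩)/√2}`. -/
noncomputable def Bx : Fin 2 → Fin 2 → ℂ :=
  ![![((Real.sqrt 2)⁻¹ : ℂ), ((Real.sqrt 2)⁻¹ : ℂ)],
    ![((Real.sqrt 2)⁻¹ : ℂ), -((Real.sqrt 2)⁻¹ : ℂ)]]

/-- The Pauli `y` basis `{(|0⟩+i|1⟩)/√2, (|0⟩−i|1⟩)/√2}`. -/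
noncomputable def By : Fin 2 → Fin 2 → ℂ :=
  ![![((Real.sqrt 2)⁻¹ : ℂ), Complex.I * ((Real.sqrt 2)⁻¹ : ℂ)],
    ![((Real.sqrt 2)⁻¹ : ℂ), -(Complex.I * ((Real.sqrt 2)⁻¹ : ℂ))]]

/-- Alice's (= Bob's) measurements in the scenario `S(B_x, B_y)`. -/
noncomputable def pauliMeas : Fin 2 → Fin 2 → Fin 2 → ℂ := ![Bx, By]

section Aux

open Complex Finset

private lemma amp_lemma (u v : Fin 2 → ℂ) (θ φ : ℝ) :
    ip4 (tens u v) (diagState θ φ)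
      = conj (u 0) * conj (v 0) * (Real.cos (θ/2) : ℂ)
        + conj (u 1) * conj (v 1)
          * (Complex.exp ((φ:ℂ) * Complex.I) * (Real.sin (θ/2) : ℂ)) := by
  unfold ip4 tens diagState
  rw [Fintype.sum_prod_type]
  simp [Fin.sum_univ_two, Prod.ext_iff]

private lemma expE_lemma : Complex.exp ((Real.pi/4 : ℝ) * Complex.I)
    = ((Real.sqrt 2/2 : ℝ) : ℂ) + ((Real.sqrt 2/2 : ℝ) : ℂ) * Complex.I := by
  rw [Complex.exp_mul_I, ← Complex.ofReal_cos, ← Complex.ofReal_sin,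
    Real.cos_pi_div_four, Real.sin_pi_div_four]

private lemma sqrt2_inv_eq : (Real.sqrt 2)⁻¹ = Real.sqrt 2 / 2 := by
  rw [eq_div_iff (by norm_num : (2:ℝ) ≠ 0), inv_mul_eq_div, Real.div_sqrt]

set_option maxHeartbeats 1600000 in
private lemma bornval (θ : ℝ) (i j s t : Fin 2) :
    born pauliMeas pauliMeas (diagState θ (Real.pi/4)) i j s t
      = (1 + (if i = 1 ∧ j = 1 then (-1:ℝ) else 1) * (if s = t then 1 else -1)
          * (Real.sqrt 2/2 * Real.sin θ))/4 := by
  have h2 : Real.sqrt 2 ^ 2 = 2 := Real.sq_sqrt (by norm_num)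
  have hss : Real.sqrt 2 * Real.sqrt 2 = 2 := Real.mul_self_sqrt (by norm_num)
  have h3 : Real.sqrt 2 ^ 3 = 2 * Real.sqrt 2 := by rw [pow_succ, h2]
  have h4 : Real.sqrt 2 ^ 4 = 4 := by rw [pow_succ, h3, mul_assoc, hss]; norm_num
  have h5 : Real.sqrt 2 ^ 5 = 4 * Real.sqrt 2 := by rw [pow_succ, h4]
  have h6 : Real.sqrt 2 ^ 6 = 8 := by rw [pow_succ, h5, mul_assoc, hss]; norm_num
  have hsin : Real.sin θ = 2 * Real.sin (θ/2) * Real.cos (θ/2) := by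
    rw [show θ = 2*(θ/2) by ring, Real.sin_two_mul]; ring
  have two : ∀ x : Fin 2, x = 0 ∨ x = 1 := by decide
  unfold born
  rw [amp_lemma]
  rcases two i with rfl|rfl <;> rcases two j with rfl|rfl <;>
    rcases two s with rfl|rfl <;> rcases two t with rfl|rfl <;>
  · simp only [pauliMeas, Bx, By, Matrix.cons_val_zero, Matrix.cons_val_one,
      Matrix.head_cons, map_inv₀, map_mul, map_neg, Complex.conj_ofReal,
      Complex.conj_I, expE_lemma, ← Complex.ofReal_inv, Fin.isValue,
      Fin.reduceEq, and_self, and_true, true_and, false_and, and_false,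
      reduceIte, if_true, if_false]
    rw [Complex.sq_norm]
    simp only [Complex.normSq_apply, Complex.add_re, Complex.add_im, Complex.mul_re,
      Complex.mul_im, Complex.ofReal_re, Complex.ofReal_im, Complex.I_re, Complex.I_im,
      Complex.neg_re, Complex.neg_im]
    rw [sqrt2_inv_eq, hsin]
    ring_nf
    simp only [h2, h3, h4, h5, h6]
    ring_nf
    nlinarith [Real.sin_sq_add_cos_sq (θ*(1/2))]

/-- The CHSH functional. -/
noncomputable def Tval (e : Fin 2 → Fin 2 → Fin 2 → Fin 2 → ℝ) : ℝ :=
  (e 0 0 0 0 + e 0 0 1 1 - e 0 0 0 1 - e 0 0 1 0)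
  + (e 0 1 0 0 + e 0 1 1 1 - e 0 1 0 1 - e 0 1 1 0)
  + (e 1 0 0 0 + e 1 0 1 1 - e 1 0 0 1 - e 1 0 1 0)
  - (e 1 1 0 0 + e 1 1 1 1 - e 1 1 0 1 - e 1 1 1 0)

private lemma Tval_born (θ : ℝ) :
    Tval (born pauliMeas pauliMeas (diagState θ (Real.pi/4)))
      = 2 * Real.sqrt 2 * Real.sin θ := by
  unfold Tval
  simp only [bornval]
  norm_num
  ring

private lemma Tval_le_model (e : Fin 2 → Fin 2 → Fin 2 → Fin 2 → ℝ)
    (he : IsModel e) : Tval e ≤ 4 := by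
  obtain ⟨hpos, hsum⟩ := he
  have h00 := hsum 0 0; have h01 := hsum 0 1
  have h10 := hsum 1 0; have h11 := hsum 1 1
  simp only [Fin.sum_univ_two] at h00 h01 h10 h11
  unfold Tval
  linarith [hpos 0 0 0 1, hpos 0 0 1 0, hpos 0 1 0 1, hpos 0 1 1 0,
    hpos 1 0 0 1, hpos 1 0 1 0, hpos 1 1 0 0, hpos 1 1 1 1]

/-- `±1`-valued character of an outcome. -/
noncomputable def chiR : Fin 2 → ℝ := fun x => if x = 0 then 1 else -1

private lemma corr_eq (d : (Fin 2 ⊕ Fin 2 → Fin 2) → ℝ) (i j : Fin 2) :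
    ∑ g : Fin 2 ⊕ Fin 2 → Fin 2,
        d g * chiR (g (Sum.inl i)) * chiR (g (Sum.inr j))
      = ∑ s : Fin 2, ∑ t : Fin 2, chiR s * chiR t *
          ∑ g ∈ Finset.univ.filter
            (fun g : Fin 2 ⊕ Fin 2 → Fin 2 => g (Sum.inl i) = s ∧ g (Sum.inr j) = t),
            d g := by
  rw [← Finset.sum_fiberwise Finset.univ
    (fun g : Fin 2 ⊕ Fin 2 → Fin 2 => (g (Sum.inl i), g (Sum.inr j)))
    (fun g => d g * chiR (g (Sum.inl i)) * chiR (g (Sum.inr j)))]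
  rw [Fintype.sum_prod_type]
  refine Finset.sum_congr rfl fun s _ => Finset.sum_congr rfl fun t _ => ?_
  rw [Finset.mul_sum]
  refine Finset.sum_congr ?_ fun g hg => ?_
  · ext g; simp [Prod.ext_iff]
  · obtain ⟨hg1, hg2⟩ := (Finset.mem_filter.1 hg).2
    rw [hg1, hg2]; ring

private lemma Tval_le_nc (e : Fin 2 → Fin 2 → Fin 2 → Fin 2 → ℝ)
    (hnc : Noncontextual e) : Tval e ≤ 2 := by
  obtain ⟨d, hd0, hd1, hmar⟩ := hnc
  have h00 := corr_eq d 0 0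
  have h01 := corr_eq d 0 1
  have h10 := corr_eq d 1 0
  have h11 := corr_eq d 1 1
  have hchi0 : chiR 0 = 1 := by norm_num [chiR]
  have hchi1 : chiR 1 = -1 := by norm_num [chiR]
  simp only [hmar, Fin.sum_univ_two, hchi0, hchi1] at h00 h01 h10 h11
  have hW : ∀ g : Fin 2 ⊕ Fin 2 → Fin 2,
      chiR (g (Sum.inl 0)) * chiR (g (Sum.inr 0))
        + chiR (g (Sum.inl 0)) * chiR (g (Sum.inr 1))
        + chiR (g (Sum.inl 1)) * chiR (g (Sum.inr 0))
        - chiR (g (Sum.inl 1)) * chiR (g (Sum.inr 1)) ≤ 2 := by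
    intro g
    have two : ∀ x : Fin 2, x = 0 ∨ x = 1 := by decide
    rcases two (g (Sum.inl 0)) with h|h <;> rcases two (g (Sum.inl 1)) with h'|h' <;>
      rcases two (g (Sum.inr 0)) with h''|h'' <;> rcases two (g (Sum.inr 1)) with h'''|h''' <;>
      rw [h, h', h'', h'''] <;> norm_num [hchi0, hchi1]
  have expand : (∑ g : Fin 2 ⊕ Fin 2 → Fin 2, d g *
        (chiR (g (Sum.inl 0)) * chiR (g (Sum.inr 0))
          + chiR (g (Sum.inl 0)) * chiR (g (Sum.inr 1))
          + chiR (g (Sum.inl 1)) * chiR (g (Sum.inr 0))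
          - chiR (g (Sum.inl 1)) * chiR (g (Sum.inr 1))))
      = (∑ g : Fin 2 ⊕ Fin 2 → Fin 2, d g * chiR (g (Sum.inl 0)) * chiR (g (Sum.inr 0)))
        + (∑ g : Fin 2 ⊕ Fin 2 → Fin 2, d g * chiR (g (Sum.inl 0)) * chiR (g (Sum.inr 1)))
        + (∑ g : Fin 2 ⊕ Fin 2 → Fin 2, d g * chiR (g (Sum.inl 1)) * chiR (g (Sum.inr 0)))
        - (∑ g : Fin 2 ⊕ Fin 2 → Fin 2, d g * chiR (g (Sum.inl 1)) * chiR (g (Sum.inr 1))) := by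
    simp only [mul_add, mul_sub, Finset.sum_add_distrib, Finset.sum_sub_distrib, mul_assoc]
  have bound : (∑ g : Fin 2 ⊕ Fin 2 → Fin 2, d g * chiR (g (Sum.inl 0)) * chiR (g (Sum.inr 0)))
        + (∑ g : Fin 2 ⊕ Fin 2 → Fin 2, d g * chiR (g (Sum.inl 0)) * chiR (g (Sum.inr 1)))
        + (∑ g : Fin 2 ⊕ Fin 2 → Fin 2, d g * chiR (g (Sum.inl 1)) * chiR (g (Sum.inr 0)))
        - (∑ g : Fin 2 ⊕ Fin 2 → Fin 2, d g * chiR (g (Sum.inl 1)) * chiR (g (Sum.inr 1))) ≤ 2 := by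
    rw [← expand]
    calc (∑ g : Fin 2 ⊕ Fin 2 → Fin 2, d g *
        (chiR (g (Sum.inl 0)) * chiR (g (Sum.inr 0))
          + chiR (g (Sum.inl 0)) * chiR (g (Sum.inr 1))
          + chiR (g (Sum.inl 1)) * chiR (g (Sum.inr 0))
          - chiR (g (Sum.inl 1)) * chiR (g (Sum.inr 1))))
        ≤ ∑ g : Fin 2 ⊕ Fin 2 → Fin 2, d g * 2 :=
          Finset.sum_le_sum (fun g _ => mul_le_mul_of_nonneg_left (hW g) (hd0 g))
      _ = 2 := by rw [← Finset.sum_mul, hd1, one_mul]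
  unfold Tval
  linarith [h00, h01, h10, h11, bound]

private lemma sin_gt (θ : ℝ) (h₁ : Real.pi / 4 < θ) (h₂ : θ < 3 * Real.pi / 4) :
    Real.sqrt 2 / 2 < Real.sin θ := by
  have hπ := Real.pi_pos
  rw [← Real.sin_pi_div_four]
  rcases le_or_gt θ (Real.pi/2) with h|h
  · exact Real.strictMonoOn_sin ⟨by linarith, by linarith⟩ ⟨by linarith, h⟩ h₁
  · rw [show Real.sin θ = Real.sin (Real.pi - θ) from (Real.sin_pi_sub θ).symm]
    exact Real.strictMonoOn_sin ⟨by linarith, by linarith⟩ ⟨by linarith, by linarith⟩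
      (by linarith)

end Aux

/-- for `π/4 < θ < 3π/4`, the Born-rule empirical model of
`|diag;θ,π/4⟩` with respect to the scenario `S(B_x, B_y)` is contextual, and
consequently its contextual fraction is strictly positive. -/
theorem diag_high_entanglement_contextual
    (θ : ℝ) (h₁ : Real.pi / 4 < θ) (h₂ : θ < 3 * Real.pi / 4) :
    ¬ Noncontextual (born pauliMeas pauliMeas (diagState θ (Real.pi / 4))) ∧
    0 < CF (born pauliMeas pauliMeas (diagState θ (Real.pi / 4))) := by
  set e := born pauliMeas pauliMeas (diagState θ (Real.pi / 4)) with he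
  have hss : Real.sqrt 2 * Real.sqrt 2 = 2 := Real.mul_self_sqrt (by norm_num)
  have hs0 : (0:ℝ) ≤ Real.sqrt 2 := Real.sqrt_nonneg 2
  have hsin := sin_gt θ h₁ h₂
  have hT : Tval e = 2 * Real.sqrt 2 * Real.sin θ := Tval_born θ
  have hgt : 2 < Tval e := by rw [hT]; nlinarith [hsin, hss, hs0]
  constructor
  · intro hnc
    have := Tval_le_nc e hnc
    linarith
  · have hb : Real.sqrt 2 * Real.sin θ > 1 := by nlinarith [hsin, hss, hs0]
    have hle2 : Real.sqrt 2 ≤ 2 := by nlinarith [hss, hs0]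
    have hsup : NCF e ≤ 2 - Real.sqrt 2 * Real.sin θ := by
      apply Real.sSup_le
      · rintro l ⟨hl0, hl1, eNC, e', hmNC, hnc, hm', hdec⟩
        have hT' : Tval e = l * Tval eNC + (1-l) * Tval e' := by
          unfold Tval
          simp only [hdec]
          ring
        have b1 := Tval_le_nc eNC hnc
        have b2 := Tval_le_model e' hm'
        have m1 : l * Tval eNC ≤ l * 2 := mul_le_mul_of_nonneg_left b1 hl0
        have m2 : (1-l) * Tval e' ≤ (1-l) * 4 :=
          mul_le_mul_of_nonneg_left b2 (by linarith)
        linarith [hT, hT', m1, m2]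
      · nlinarith [Real.sin_le_one θ, hle2, hs0, Real.neg_one_le_sin θ]
    unfold CF
    linarith
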